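/- Suppose on an interval [b,T₀] ⊆ (0,T₀] we have μ₁ ≤ c(t) ≤ μ₂ (μ₁ > 0), |c'(t)| ≤ K₀λ, and the equivalence ε₀·E_kov(t) ≤ E_tar(t) for the Tarama and Kovalevskyan energies of a solution u of u'' + λ²c(t)²u = 0. Then there is a constant M₃ > 0, depending only on μ₁, K₀, ε₀, such that E_tar'(t) ≤ (M₃/λ)·E_tar(t)·(|c''(t)| + |c'(t)|²) for all t ∈ (b,T₀), and hence E_tar(t) ≤ E_tar(b)·exp( (M₃/λ)·∫_b^{T₀} (|c''(s)| + |c'(s)|²) ds ). -/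

import Mathlib

open Set MeasureTheory intervalIntegral

private lemma aux_poly (K₀ μ₁ μ₂ lam C P Q U V : ℝ) (hμ₁ : 0 < μ₁) (hC1 : μ₁ ≤ C)
    (hC2 : C ≤ μ₂) (hP : |P| ≤ K₀ * lam) (hlam : 0 < lam) (hK₀ : 0 < K₀) :
    (2*C*P*Q*U^2 - 3*P^3*U^2 + 2*C*P^2*(U*V) + 4*C^2*Q*(U*V) - 8*C*P^2*(U*V)) * lam
      ≤ (2*μ₂*K₀ + 3*K₀ + 5*μ₂ + 2*μ₂^2) * ((V^2 + lam^2*U^2) * (|Q| + |P|^2)) := by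
  rw [sq_abs]
  have hC0 : 0 < C := hμ₁.trans_le hC1
  have hμ₂0 : 0 < μ₂ := hC0.trans_le hC2
  set Y := U*V with hY
  set X := U^2 with hXdef
  set F := V^2 + lam^2*X with hF
  have hX0 : 0 ≤ X := hXdef ▸ sq_nonneg U
  have hF0 : 0 ≤ F := by
    rw [hF]; nlinarith [sq_nonneg V, mul_nonneg (sq_nonneg lam) hX0]
  have hXF : lam^2 * X ≤ F := by rw [hF]; nlinarith [sq_nonneg V]
  have hYF : 2*lam*|Y| ≤ F := by
    rw [hF, hY, hXdef, abs_mul]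
    nlinarith [sq_nonneg (lam*|U| - |V|), sq_abs U, sq_abs V]
  have hY1 : 2*lam*Y ≤ F := by
    have h := le_abs_self Y
    nlinarith [mul_le_mul_of_nonneg_left h (by positivity : (0:ℝ) ≤ 2*lam)]
  have hY2 : -(2*lam*Y) ≤ F := by
    have h := neg_abs_le Y
    nlinarith [mul_le_mul_of_nonneg_left h (by positivity : (0:ℝ) ≤ 2*lam)]
  have e1 : (2*C*P*Q*X) * lam ≤ 2*μ₂*K₀*(F*|Q|) := by
    have hPP' : P*Q ≤ K₀*lam*|Q| := by
      calc P*Q ≤ |P * Q| := le_abs_self _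
        _ = |P| * |Q| := abs_mul _ _
        _ ≤ K₀*lam*|Q| := mul_le_mul_of_nonneg_right hP (abs_nonneg _)
    have h1 := mul_le_mul_of_nonneg_left hPP'
      (mul_nonneg (mul_nonneg (mul_nonneg (by norm_num : (0:ℝ) ≤ 2) hlam.le) hC0.le) hX0)
    have h2 : C*(lam^2*X) ≤ μ₂*F := mul_le_mul hC2 hXF (mul_nonneg (sq_nonneg lam) hX0) hμ₂0.le
    have h3 := mul_le_mul_of_nonneg_left h2
      (mul_nonneg (mul_nonneg (by norm_num : (0:ℝ) ≤ 2) hK₀.le) (abs_nonneg Q))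
    linarith [h1, h3]
  have e2 : (-(3*P^3*X)) * lam ≤ 3*K₀*(F*P^2) := by
    have hp3 : -(P^3) ≤ K₀*lam*P^2 := by
      have h := neg_abs_le (P^3)
      have h2 : |P^3| = |P| * P^2 := by rw [abs_pow, ← sq_abs P]; ring
      have h3 : |P| * P^2 ≤ K₀*lam*P^2 := mul_le_mul_of_nonneg_right hP (sq_nonneg P)
      linarith
    have h1 := mul_le_mul_of_nonneg_left hp3
      (mul_nonneg (mul_nonneg (by norm_num : (0:ℝ) ≤ 3) hlam.le) hX0)
    have h2 := mul_le_mul_of_nonneg_left hXF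
      (mul_nonneg (mul_nonneg (by norm_num : (0:ℝ) ≤ 3) hK₀.le) (sq_nonneg P))
    linarith [h1, h2]
  have e3 : (2*C*P^2*Y) * lam ≤ μ₂*(F*P^2) := by
    have h1 := mul_le_mul_of_nonneg_left hY1 (mul_nonneg hC0.le (sq_nonneg P))
    have h2 := mul_le_mul_of_nonneg_left hC2 (mul_nonneg (sq_nonneg P) hF0)
    linarith [h1, h2]
  have e4 : (4*C^2*Q*Y) * lam ≤ 2*μ₂^2*(F*|Q|) := by
    have hq : Q*Y ≤ |Q| * |Y| := (le_abs_self _).trans (abs_mul Q Y).le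
    have h1 := mul_le_mul_of_nonneg_left hq
      (mul_nonneg (mul_nonneg (by norm_num : (0:ℝ) ≤ 4) hlam.le) (sq_nonneg C))
    have h2 := mul_le_mul_of_nonneg_left hYF
      (mul_nonneg (mul_nonneg (by norm_num : (0:ℝ) ≤ 2) (sq_nonneg C)) (abs_nonneg Q))
    have h3 : C^2 ≤ μ₂^2 := by nlinarith
    have h4 := mul_le_mul_of_nonneg_right h3 (mul_nonneg (abs_nonneg Q) hF0)
    linarith [h1, h2, h4]
  have e5 : (-(8*C*P^2*Y)) * lam ≤ 4*μ₂*(F*P^2) := by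
    have h1 := mul_le_mul_of_nonneg_left hY2
      (mul_nonneg (mul_nonneg (by norm_num : (0:ℝ) ≤ 4) hC0.le) (sq_nonneg P))
    have h2 := mul_le_mul_of_nonneg_left hC2
      (mul_nonneg (mul_nonneg (by norm_num : (0:ℝ) ≤ 4) (sq_nonneg P)) hF0)
    linarith [h1, h2]
  have q1 : 0 ≤ K₀*(F*|Q|) := mul_nonneg hK₀.le (mul_nonneg hF0 (abs_nonneg Q))
  have q2 : 0 ≤ μ₂*(F*|Q|) := mul_nonneg hμ₂0.le (mul_nonneg hF0 (abs_nonneg Q))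
  have q3 : 0 ≤ μ₂*(K₀*(F*P^2)) :=
    mul_nonneg hμ₂0.le (mul_nonneg hK₀.le (mul_nonneg hF0 (sq_nonneg P)))
  have q4 : 0 ≤ μ₂^2*(F*P^2) := mul_nonneg (sq_nonneg μ₂) (mul_nonneg hF0 (sq_nonneg P))
  linarith [e1, e2, e3, e4, e5, q1, q2, q3, q4]

private lemma my_gronwall {f F g : ℝ → ℝ} {a b k : ℝ} (hab : a < b)
    (hf : ∀ t ∈ Set.Icc a b, HasDerivAt f (F t) t)
    (hg : ContinuousOn g (Set.Icc a b))
    (hg' : ∀ t ∈ Set.Ioo a b, ContinuousAt g t)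
    (hgnn : ∀ s, 0 ≤ g s)
    (hF : ∀ t ∈ Set.Icc a b, F t ≤ k * f t * g t)
    (hk : 0 ≤ k) (hf0 : 0 ≤ f a) :
    ∀ t ∈ Set.Icc a b, f t ≤ f a * Real.exp (k * ∫ s in a..b, g s) := by
  have hguIcc : ContinuousOn g (Set.uIcc a b) := by rwa [Set.uIcc_of_le hab.le]
  have hint : IntervalIntegrable g MeasureTheory.volume a b := hguIcc.intervalIntegrable
  have hGcont : ContinuousOn (fun r => ∫ s in a..r, g s) (Set.Icc a b) := by
    have h := intervalIntegral.continuousOn_primitive_interval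
      (f := g) (a := a) (b := b) (μ := MeasureTheory.volume)
      (by rw [Set.uIcc_of_le hab.le]; exact hg.integrableOn_Icc)
    rwa [Set.uIcc_of_le hab.le] at h
  have hGd : ∀ x ∈ Set.Ioo a b, HasDerivAt (fun r => ∫ s in a..r, g s) (g x) x := by
    intro x hx
    refine intervalIntegral.integral_hasDerivAt_right
      (hint.mono_set ?_) ?_ (hg' x hx)
    · rw [Set.uIcc_of_le hx.1.le, Set.uIcc_of_le hab.le]
      exact Set.Icc_subset_Icc le_rfl hx.2.le
    · exact ContinuousAt.stronglyMeasurableAtFilter isOpen_Ioo hg' x hx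
  set φ : ℝ → ℝ := fun r => f r * Real.exp (-(k * ∫ s in a..r, g s)) with hφ
  have hφd : ∀ x ∈ Set.Ioo a b, HasDerivAt φ
      (F x * Real.exp (-(k * ∫ s in a..x, g s)) +
        f x * (Real.exp (-(k * ∫ s in a..x, g s)) * (-(k * g x)))) x := by
    intro x hx
    exact (hf x (Set.Ioo_subset_Icc_self hx)).mul ((((hGd x hx).const_mul k).neg).exp)
  have hφc : ContinuousOn φ (Set.Icc a b) := by
    refine ContinuousOn.mul (fun x hx => (hf x hx).continuousAt.continuousWithinAt) ?_
    exact Real.continuous_exp.comp_continuousOn ((continuousOn_const.mul hGcont).neg)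
  have hanti : AntitoneOn φ (Set.Icc a b) := by
    apply antitoneOn_of_deriv_nonpos (convex_Icc a b) hφc
    · rw [interior_Icc]
      exact fun x hx => (hφd x hx).differentiableAt.differentiableWithinAt
    · rw [interior_Icc]
      intro x hx
      rw [(hφd x hx).deriv]
      have he := Real.exp_pos (-(k * ∫ s in a..x, g s))
      have h1 := hF x (Set.Ioo_subset_Icc_self hx)
      nlinarith [mul_le_mul_of_nonneg_right h1 he.le]
  intro t ht
  have h2 : φ t ≤ φ a := hanti ⟨le_refl a, hab.le⟩ ht ht.1
  have hφa : φ a = f a := by simp [hφ]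
  have hGle : (∫ s in a..t, g s) ≤ ∫ s in a..b, g s :=
    intervalIntegral.integral_mono_interval (le_refl a) ht.1 ht.2
      (MeasureTheory.ae_of_all _ fun s => hgnn s) hint
  have h3 : f t ≤ f a * Real.exp (k * ∫ s in a..t, g s) := by
    have h4 := mul_le_mul_of_nonneg_right h2 (Real.exp_pos (k * ∫ s in a..t, g s)).le
    rw [hφa] at h4
    calc f t = f t * Real.exp (-(k * ∫ s in a..t, g s)) * Real.exp (k * ∫ s in a..t, g s) := by
          rw [mul_assoc, ← Real.exp_add]; simp
      _ ≤ f a * Real.exp (k * ∫ s in a..t, g s) := h4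
  calc f t ≤ f a * Real.exp (k * ∫ s in a..t, g s) := h3
    _ ≤ f a * Real.exp (k * ∫ s in a..b, g s) := by
        refine mul_le_mul_of_nonneg_left ?_ hf0
        exact Real.exp_le_exp.mpr (mul_le_mul_of_nonneg_left hGle hk)

theorem stmt6 (T₀ μ₁ μ₂ K₀ ε₀ lam b : ℝ) (hT : 0 < T₀) (hμ₁ : 0 < μ₁) (hμ : μ₁ < μ₂)
    (hK₀ : 0 < K₀) (hε₀ : 0 < ε₀) (hlam : 0 < lam) (hb : 0 < b) (hbT : b < T₀)
    (c u : ℝ → ℝ)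
    (hc : ∀ t ∈ Set.Ioc 0 T₀, DifferentiableAt ℝ c t)
    (hc' : ∀ t ∈ Set.Ioc 0 T₀, DifferentiableAt ℝ (deriv c) t)
    (hccont : ContinuousOn (deriv (deriv c)) (Set.Ioc 0 T₀))
    (hcb : ∀ t ∈ Set.Icc b T₀, μ₁ ≤ c t ∧ c t ≤ μ₂)
    (hc'bound : ∀ t ∈ Set.Icc b T₀, |deriv c t| ≤ K₀ * lam)
    (hu : ∀ t ∈ Set.Ioc 0 T₀, DifferentiableAt ℝ u t)
    (hu' : ∀ t ∈ Set.Ioc 0 T₀, DifferentiableAt ℝ (deriv u) t)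
    (hode : ∀ t ∈ Set.Ioc 0 T₀, deriv (deriv u) t + lam ^ 2 * (c t) ^ 2 * u t = 0)
    (hequiv : ∀ t ∈ Set.Icc b T₀,
      ε₀ * ((deriv u t) ^ 2 + lam ^ 2 * (u t) ^ 2) ≤
        (deriv u t) ^ 2 / c t + lam ^ 2 * c t * (u t) ^ 2 +
          (deriv c t) ^ 2 * (u t) ^ 2 / (4 * (c t) ^ 3) +
          deriv c t * u t * deriv u t / (c t) ^ 2) :
    ∃ M₃ : ℝ, 0 < M₃ ∧
      (∀ t ∈ Set.Ioo b T₀,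
        deriv (fun s =>
            (deriv u s) ^ 2 / c s + lam ^ 2 * c s * (u s) ^ 2 +
              (deriv c s) ^ 2 * (u s) ^ 2 / (4 * (c s) ^ 3) +
              deriv c s * u s * deriv u s / (c s) ^ 2) t ≤
          M₃ / lam *
            ((deriv u t) ^ 2 / c t + lam ^ 2 * c t * (u t) ^ 2 +
              (deriv c t) ^ 2 * (u t) ^ 2 / (4 * (c t) ^ 3) +
              deriv c t * u t * deriv u t / (c t) ^ 2) *
            (|deriv (deriv c) t| + |deriv c t| ^ 2)) ∧
      (∀ t ∈ Set.Icc b T₀,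
        (deriv u t) ^ 2 / c t + lam ^ 2 * c t * (u t) ^ 2 +
            (deriv c t) ^ 2 * (u t) ^ 2 / (4 * (c t) ^ 3) +
            deriv c t * u t * deriv u t / (c t) ^ 2 ≤
          ((deriv u b) ^ 2 / c b + lam ^ 2 * c b * (u b) ^ 2 +
              (deriv c b) ^ 2 * (u b) ^ 2 / (4 * (c b) ^ 3) +
              deriv c b * u b * deriv u b / (c b) ^ 2) *
            Real.exp (M₃ / lam *
              ∫ s in b..T₀, |deriv (deriv c) s| + |deriv c s| ^ 2)) := by
  have hsub : Set.Icc b T₀ ⊆ Set.Ioc 0 T₀ := fun t ht => ⟨hb.trans_le ht.1, ht.2⟩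
  have hμ₂0 : 0 < μ₂ := hμ₁.trans hμ
  have hM₃pos : 0 < (2*μ₂*K₀ + 3*K₀ + 5*μ₂ + 2*μ₂^2) / (4*μ₁^4*ε₀) := by
    refine div_pos ?_ (mul_pos (mul_pos (by norm_num : (0:ℝ) < 4) (pow_pos hμ₁ 4)) hε₀)
    nlinarith [mul_pos hμ₂0 hK₀, sq_nonneg μ₂]
  have hderiv : ∀ t ∈ Set.Icc b T₀,
      HasDerivAt (fun s => (deriv u s) ^ 2 / c s + lam ^ 2 * c s * (u s) ^ 2 + (deriv c s) ^ 2 * (u s) ^ 2 / (4 * (c s) ^ 3) + deriv c s * u s * deriv u s / (c s) ^ 2) ((2*(c t)*(deriv c t)*(deriv (deriv c) t)*(u t)^2 - 3*(deriv c t)^3*(u t)^2 + 2*(c t)*(deriv c t)^2*(u t * deriv u t) + 4*(c t)^2*(deriv (deriv c) t)*(u t * deriv u t) - 8*(c t)*(deriv c t)^2*(u t * deriv u t)) / (4 * (c t) ^ 4)) t := by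
    intro t ht
    have ht' := hsub ht
    have hct : 0 < c t := hμ₁.trans_le (hcb t ht).1
    have hc1 : HasDerivAt c (deriv c t) t := (hc t ht').hasDerivAt
    have hc2 : HasDerivAt (deriv c) (deriv (deriv c) t) t := (hc' t ht').hasDerivAt
    have hu1 : HasDerivAt u (deriv u t) t := (hu t ht').hasDerivAt
    have hu2 : HasDerivAt (deriv u) (-(lam ^ 2 * (c t) ^ 2 * u t)) t := by
      have h0 := hode t ht'
      have h1 := (hu' t ht').hasDerivAt
      have h2 : deriv (deriv u) t = -(lam ^ 2 * (c t) ^ 2 * u t) := by linarith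
      rwa [h2] at h1
    have h1 := (hu2.pow 2).div hc1 hct.ne'
    have h2 := (hc1.const_mul (lam ^ 2)).mul (hu1.pow 2)
    have h3 := ((hc2.pow 2).mul (hu1.pow 2)).div ((hc1.pow 3).const_mul (4:ℝ))
      (by exact ne_of_gt (mul_pos (by norm_num) (pow_pos hct 3)))
    have h4 := ((hc2.mul hu1).mul hu2).div (hc1.pow 2) (pow_ne_zero 2 hct.ne')
    have H := ((h1.add h2).add h3).add h4
    refine H.congr_deriv ?_
    have hcne : c t ≠ 0 := hct.ne'
    simp only [Pi.pow_apply, Pi.mul_apply]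
    field_simp
    ring
  have hbound : ∀ t ∈ Set.Icc b T₀,
      (2*(c t)*(deriv c t)*(deriv (deriv c) t)*(u t)^2 - 3*(deriv c t)^3*(u t)^2 + 2*(c t)*(deriv c t)^2*(u t * deriv u t) + 4*(c t)^2*(deriv (deriv c) t)*(u t * deriv u t) - 8*(c t)*(deriv c t)^2*(u t * deriv u t)) / (4 * (c t) ^ 4) ≤
        (2*μ₂*K₀ + 3*K₀ + 5*μ₂ + 2*μ₂^2) / (4*μ₁^4*ε₀) / lam * ((deriv u t) ^ 2 / c t + lam ^ 2 * c t * (u t) ^ 2 + (deriv c t) ^ 2 * (u t) ^ 2 / (4 * (c t) ^ 3) + deriv c t * u t * deriv u t / (c t) ^ 2) * (|deriv (deriv c) t| + |deriv c t| ^ 2) := by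
    intro t ht
    obtain ⟨hct₁, hct₂⟩ := hcb t ht
    have hct : 0 < c t := hμ₁.trans_le hct₁
    have hEeq := hequiv t ht
    have haux := aux_poly K₀ μ₁ μ₂ lam (c t) (deriv c t) (deriv (deriv c) t) (u t) (deriv u t)
      hμ₁ hct₁ hct₂ (hc'bound t ht) hlam hK₀
    rw [div_le_iff₀ (mul_pos (by norm_num : (0:ℝ) < 4) (pow_pos hct 4))]
    have hA : (0:ℝ) ≤ (|deriv (deriv c) t| + |deriv c t| ^ 2) := by positivity
    have hM : (0:ℝ) ≤ (2*μ₂*K₀ + 3*K₀ + 5*μ₂ + 2*μ₂^2) / (4*μ₁^4*ε₀) / lam := div_nonneg hM₃pos.le hlam.le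
    have hEt : (0:ℝ) ≤ (deriv u t) ^ 2 / c t + lam ^ 2 * c t * (u t) ^ 2 + (deriv c t) ^ 2 * (u t) ^ 2 / (4 * (c t) ^ 3) + deriv c t * u t * deriv u t / (c t) ^ 2 := le_trans (by positivity) hEeq
    calc (2*(c t)*(deriv c t)*(deriv (deriv c) t)*(u t)^2 - 3*(deriv c t)^3*(u t)^2 + 2*(c t)*(deriv c t)^2*(u t * deriv u t) + 4*(c t)^2*(deriv (deriv c) t)*(u t * deriv u t) - 8*(c t)*(deriv c t)^2*(u t * deriv u t))
        ≤ (2*μ₂*K₀ + 3*K₀ + 5*μ₂ + 2*μ₂^2) / lam * (((deriv u t) ^ 2 + lam ^ 2 * (u t) ^ 2) * (|deriv (deriv c) t| + |deriv c t| ^ 2)) := by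
          rw [div_mul_eq_mul_div, le_div_iff₀ hlam]
          exact haux
      _ = (2*μ₂*K₀ + 3*K₀ + 5*μ₂ + 2*μ₂^2) / (4*μ₁^4*ε₀) / lam * (ε₀ * ((deriv u t) ^ 2 + lam ^ 2 * (u t) ^ 2)) * (|deriv (deriv c) t| + |deriv c t| ^ 2) * (4 * μ₁ ^ 4) := by
          field_simp
      _ ≤ (2*μ₂*K₀ + 3*K₀ + 5*μ₂ + 2*μ₂^2) / (4*μ₁^4*ε₀) / lam * ((deriv u t) ^ 2 / c t + lam ^ 2 * c t * (u t) ^ 2 + (deriv c t) ^ 2 * (u t) ^ 2 / (4 * (c t) ^ 3) + deriv c t * u t * deriv u t / (c t) ^ 2) * (|deriv (deriv c) t| + |deriv c t| ^ 2) * (4 * μ₁ ^ 4) := by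
          refine mul_le_mul_of_nonneg_right ?_ (by positivity)
          refine mul_le_mul_of_nonneg_right ?_ hA
          exact mul_le_mul_of_nonneg_left hEeq hM
      _ ≤ (2*μ₂*K₀ + 3*K₀ + 5*μ₂ + 2*μ₂^2) / (4*μ₁^4*ε₀) / lam * ((deriv u t) ^ 2 / c t + lam ^ 2 * c t * (u t) ^ 2 + (deriv c t) ^ 2 * (u t) ^ 2 / (4 * (c t) ^ 3) + deriv c t * u t * deriv u t / (c t) ^ 2) * (|deriv (deriv c) t| + |deriv c t| ^ 2) * (4 * (c t) ^ 4) := by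
          refine mul_le_mul_of_nonneg_left ?_ (mul_nonneg (mul_nonneg hM hEt) hA)
          have := pow_le_pow_left₀ hμ₁.le hct₁ 4
          linarith
  refine ⟨(2*μ₂*K₀ + 3*K₀ + 5*μ₂ + 2*μ₂^2) / (4*μ₁^4*ε₀), hM₃pos,
    fun t ht => le_of_eq_of_le (hderiv t (Set.Ioo_subset_Icc_self ht)).deriv
      (hbound t (Set.Ioo_subset_Icc_self ht)), ?_⟩
  have hgcont : ContinuousOn (fun s => |deriv (deriv c) s| + |deriv c s| ^ 2) (Set.Icc b T₀) := by
    have h1 : ContinuousOn (deriv c) (Set.Icc b T₀) :=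
      fun t ht => ((hc' t (hsub ht)).continuousAt.continuousWithinAt)
    exact ((hccont.mono hsub).abs).add ((h1.abs).pow 2)
  have hg' : ∀ t ∈ Set.Ioo b T₀, ContinuousAt (fun s => |deriv (deriv c) s| + |deriv c s| ^ 2) t := by
    intro t ht
    have h0 : t ∈ Set.Ioc 0 T₀ := ⟨hb.trans ht.1, ht.2.le⟩
    have h1 : ContinuousAt (deriv (deriv c)) t := hccont.continuousAt (Ioc_mem_nhds (hb.trans ht.1) ht.2)
    have h2 : ContinuousAt (deriv c) t := (hc' t h0).continuousAt
    exact (h1.abs).add ((h2.abs).pow 2)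
  have hf0 : (0:ℝ) ≤ (deriv u b) ^ 2 / c b + lam ^ 2 * c b * (u b) ^ 2 + (deriv c b) ^ 2 * (u b) ^ 2 / (4 * (c b) ^ 3) + deriv c b * u b * deriv u b / (c b) ^ 2 := le_trans (by positivity) (hequiv b ⟨le_refl b, hbT.le⟩)
  exact my_gronwall hbT hderiv hgcont hg' (fun s => by positivity) hbound
    (div_nonneg hM₃pos.le hlam.le) hf0
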